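/- Let k be a field and A = k[X,Y]. No variable of A is a rectangular element of A. In particular, if F ∈ A and A = k[F,G] for some G ∈ A, then for every coordinate system (U,V) of A there do not exist m,n ≥ 1 with (m,n) in the support of F with respect to (U,V) and the support contained in [0,m] × [0,n]. -/

import Mathlib

open MvPolynomial

variable {k : Type} [Field k]

/-- A surjective ring endomorphism of a Noetherian commutative ring is injective. -/
theorem my_inj_of_surj {R : Type*} [CommRing R] [IsNoetherianRing R] (f : R →+* R)
    (hf : Function.Surjective f) : Function.Injective f := by
  let iter : ℕ → R →+* R := fun n => Nat.rec (RingHom.id R) (fun _ g => f.comp g) n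
  have hiter_surj : ∀ n, Function.Surjective (iter n) := by
    intro n
    induction n with
    | zero => exact Function.surjective_id
    | succ n ih => exact hf.comp ih
  have hmono : Monotone fun n => RingHom.ker (iter n) := by
    apply monotone_nat_of_le_succ
    intro n x hx
    have hx' : iter n x = 0 := hx
    show f (iter n x) = 0
    rw [hx', map_zero]
  obtain ⟨N, hN⟩ := monotone_stabilizes_iff_noetherian.mpr inferInstance
    (⟨fun n => RingHom.ker (iter n), hmono⟩ : ℕ →o Ideal R)
  rw [RingHom.injective_iff_ker_eq_bot]
  rw [eq_bot_iff]
  intro x hx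
  obtain ⟨y, hy⟩ := hiter_surj N x
  have : y ∈ RingHom.ker (iter (N + 1)) := by
    show f (iter N y) = 0
    rw [hy]; exact hx
  have h2 := hN (N+1) (by omega)
  simp only [OrderHom.coe_mk] at h2
  rw [← h2] at this
  have h3 : iter N y = 0 := this
  rw [← hy, h3]
  exact Submodule.zero_mem ⊥




noncomputable def Emv : MvPolynomial (Fin 2) k ≃ₐ[k] Polynomial (MvPolynomial (Fin 1) k) :=
  MvPolynomial.finSuccEquiv k 1

/-- the embedding MvPolynomial (Fin 1) k → Polynomial k, X 0 ↦ X -/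
noncomputable def mu : MvPolynomial (Fin 1) k →ₐ[k] Polynomial k :=
  MvPolynomial.aeval ![Polynomial.X]

lemma mu_injective : Function.Injective (mu (k := k)) := by
  have h : (Polynomial.aeval (X 0 : MvPolynomial (Fin 1) k)).comp (mu (k := k)) =
      AlgHom.id k (MvPolynomial (Fin 1) k) := by
    apply MvPolynomial.algHom_ext
    intro i
    fin_cases i
    simp [mu]
  intro x y hxy
  have := congrArg (Polynomial.aeval (X 0 : MvPolynomial (Fin 1) k)) hxy
  have hx := congrFun (congrArg (fun f => f.toFun) h) x
  have hy := congrFun (congrArg (fun f => f.toFun) h) y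
  simp only [AlgHom.toFun_eq_coe, AlgHom.coe_comp, Function.comp_apply, AlgHom.coe_id, id_eq] at hx hy
  rw [← hx, ← hy]; exact this

lemma unit_is_C (u : MvPolynomial (Fin 2) k) (hu : IsUnit u) : ∃ α : k, u = C α := by
  have h1 : IsUnit (Emv (k := k) u) := hu.map _
  obtain ⟨r, hr, hru⟩ := Polynomial.isUnit_iff.mp h1
  have h2 : IsUnit (mu (k := k) r) := hr.map _
  obtain ⟨s, hs, hsu⟩ := Polynomial.isUnit_iff.mp h2
  have hrC : r = MvPolynomial.C s := by
    apply mu_injective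
    rw [← hsu]; simp [mu]
  refine ⟨s, ?_⟩
  apply (Emv (k := k)).injective
  rw [← hru, hrC]
  simp [Emv, MvPolynomial.finSuccEquiv_apply]

lemma finSuccEquiv_C' (s : k) : (MvPolynomial.finSuccEquiv k 1) (MvPolynomial.C s)
    = Polynomial.C (MvPolynomial.C s) := by
  simp [MvPolynomial.finSuccEquiv_apply]

lemma dvd_of_eval_zero (H : MvPolynomial (Fin 2) k) (c : k)
    (h : MvPolynomial.aeval ![Polynomial.C c, Polynomial.X] H = 0) :
    (X 0 - C c) ∣ H := by
  set E := MvPolynomial.finSuccEquiv k 1 with hE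
  set ν : Polynomial (MvPolynomial (Fin 1) k) →+* Polynomial k :=
    Polynomial.eval₂RingHom (mu (k := k)).toRingHom (Polynomial.C c) with hν
  have key : ν.comp (E : MvPolynomial (Fin 2) k →+* Polynomial (MvPolynomial (Fin 1) k)) =
      (MvPolynomial.aeval ![Polynomial.C c, Polynomial.X] :
        MvPolynomial (Fin 2) k →ₐ[k] Polynomial k).toRingHom := by
    apply MvPolynomial.ringHom_ext
    · intro r
      simp [hν, hE, finSuccEquiv_C', mu]
    · intro i
      fin_cases i
      · simp [hν, hE, MvPolynomial.finSuccEquiv_X_zero]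
      · have : E (X (1 : Fin 2)) = Polynomial.C (X 0) := by
          have : (1 : Fin 2) = (0 : Fin 1).succ := rfl
          rw [this, hE, MvPolynomial.finSuccEquiv_X_succ]
        simp [this, hν, mu]
  have key2 : (mu (k := k)).toRingHom.comp
      (Polynomial.evalRingHom (MvPolynomial.C c)) = ν := by
    apply Polynomial.ringHom_ext
    · intro r; simp [hν]
    · simp [hν, mu]
  have hw : mu (k := k) (Polynomial.eval (MvPolynomial.C c) (E H)) = 0 := by
    have := congrArg (fun f => f (E H)) key2
    simp only [RingHom.comp_apply] at this
    have h2 : ν (E H) = MvPolynomial.aeval ![Polynomial.C c, Polynomial.X] H := by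
      have h2' := congrArg (fun f => f H) key
      simpa using h2'
    have : (mu (k := k)).toRingHom (Polynomial.eval (MvPolynomial.C c) (E H)) = ν (E H) := this
    show (mu (k := k)).toRingHom (Polynomial.eval (MvPolynomial.C c) (E H)) = 0
    rw [this, h2]
    exact h
  have hw0 : Polynomial.eval (MvPolynomial.C c) (E H) = 0 := by
    apply mu_injective
    rw [hw]; exact (map_zero _).symm
  have hdvd : (Polynomial.X - Polynomial.C (MvPolynomial.C c)) ∣ E H :=
    Polynomial.dvd_iff_isRoot.mpr hw0
  obtain ⟨g, hg⟩ := hdvd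
  refine ⟨E.symm g, ?_⟩
  apply E.injective
  rw [hg, map_mul, AlgEquiv.apply_symm_apply, map_sub]
  congr 1
  rw [hE, MvPolynomial.finSuccEquiv_X_zero, finSuccEquiv_C']


lemma corner_eval_ne_zero (H : MvPolynomial (Fin 2) k) {m n : ℕ} (hm : 1 ≤ m) (hn : 1 ≤ n)
    (hc : MvPolynomial.coeff (Finsupp.single 0 m + Finsupp.single 1 n) H ≠ 0)
    (hs : ∀ d ∈ H.support, d 0 ≤ m ∧ d 1 ≤ n)
    (p q : Polynomial k) (hp : 1 ≤ p.natDegree) (hq : 1 ≤ q.natDegree) :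
    MvPolynomial.aeval ![p, q] H ≠ 0 := by
  have hcorner0 : (Finsupp.single (0:Fin 2) m + Finsupp.single (1:Fin 2) n : Fin 2 →₀ ℕ) 0 = m := by
    simp [Finsupp.single_apply]
  have hcorner1 : (Finsupp.single (0:Fin 2) m + Finsupp.single (1:Fin 2) n : Fin 2 →₀ ℕ) 1 = n := by
    simp [Finsupp.single_apply]
  have hp0 : p ≠ 0 := fun h => by simp [h] at hp
  have hq0 : q ≠ 0 := fun h => by simp [h] at hq
  set corner : Fin 2 →₀ ℕ := Finsupp.single 0 m + Finsupp.single 1 n with hcorner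
  set a := p.natDegree
  set b := q.natDegree
  set D := m * a + n * b with hD
  have hmem : corner ∈ H.support := MvPolynomial.mem_support_iff.mpr hc
  have hexp : MvPolynomial.aeval ![p, q] H =
      ∑ d ∈ H.support, Polynomial.C (MvPolynomial.coeff d H) * (p ^ d 0 * q ^ d 1) := by
    rw [MvPolynomial.aeval_def, MvPolynomial.eval₂_eq']
    apply Finset.sum_congr rfl
    intro d _
    rw [Fin.prod_univ_two]
    simp [Polynomial.algebraMap_eq]
  intro h0
  have hcoeff : Polynomial.coeff (∑ d ∈ H.support,
      Polynomial.C (MvPolynomial.coeff d H) * (p ^ d 0 * q ^ d 1)) D = 0 := by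
    rw [← hexp, h0, Polynomial.coeff_zero]
  rw [Polynomial.finset_sum_coeff] at hcoeff
  rw [Finset.sum_eq_single_of_mem corner hmem] at hcoeff
  · -- the corner term is nonzero
    rw [hcorner] at hcoeff
    have hnd : (p ^ m * q ^ n).natDegree = D := by
      rw [Polynomial.natDegree_mul (pow_ne_zero _ hp0) (pow_ne_zero _ hq0),
        Polynomial.natDegree_pow, Polynomial.natDegree_pow]
    rw [hcorner0, hcorner1, Polynomial.coeff_C_mul, ← hnd, Polynomial.coeff_natDegree,
      Polynomial.leadingCoeff_mul, Polynomial.leadingCoeff_pow, Polynomial.leadingCoeff_pow]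
      at hcoeff
    have : p.leadingCoeff ≠ 0 := Polynomial.leadingCoeff_ne_zero.mpr hp0
    have : q.leadingCoeff ≠ 0 := Polynomial.leadingCoeff_ne_zero.mpr hq0
    field_simp at hcoeff
    rcases mul_eq_zero.mp hcoeff with h | h
    · rcases mul_eq_zero.mp h with h | h
      · exact hc h
      · exact ‹p.leadingCoeff ≠ 0› ((pow_eq_zero_iff (by omega)).mp h)
    · exact ‹q.leadingCoeff ≠ 0› ((pow_eq_zero_iff (by omega)).mp h)
  · intro d hd hdne
    have hdm : d 0 ≤ m := (hs d hd).1
    have hdn : d 1 ≤ n := (hs d hd).2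
    have hne : d 0 ≠ m ∨ d 1 ≠ n := by
      by_contra hcon
      push_neg at hcon
      apply hdne
      ext i
      fin_cases i
      · show d 0 = corner 0
        rw [hcon.1, hcorner, hcorner0]
      · show d 1 = corner 1
        rw [hcon.2, hcorner, hcorner1]
    have hlt : d 0 * a + d 1 * b < D := by
      rw [hD]
      rcases hne with h | h
      · have h1 : d 0 * a < m * a := by
          apply Nat.mul_lt_mul_of_lt_of_le (lt_of_le_of_ne hdm h) le_rfl
          omega
        have h2 : d 1 * b ≤ n * b := Nat.mul_le_mul_right _ hdn
        omega
      · have h1 : d 0 * a ≤ m * a := Nat.mul_le_mul_right _ hdm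
        have h2 : d 1 * b < n * b := by
          apply Nat.mul_lt_mul_of_lt_of_le (lt_of_le_of_ne hdn h) le_rfl
          omega
        omega
    rw [Polynomial.coeff_C_mul, Polynomial.coeff_eq_zero_of_natDegree_lt, mul_zero]
    calc (p ^ d 0 * q ^ d 1).natDegree ≤ (p ^ d 0).natDegree + (q ^ d 1).natDegree :=
          Polynomial.natDegree_mul_le
      _ ≤ d 0 * a + d 1 * b := add_le_add Polynomial.natDegree_pow_le Polynomial.natDegree_pow_le
      _ < D := hlt



lemma range_pair (p q : Polynomial k) : Set.range ![p, q] = {p, q} := by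
  ext x
  constructor
  · rintro ⟨i, rfl⟩
    fin_cases i
    · left; rfl
    · right; rfl
  · rintro (rfl | rfl)
    · exact ⟨0, rfl⟩
    · exact ⟨1, rfl⟩

lemma range_pair' (p q : MvPolynomial (Fin 2) k) : Set.range ![p, q] = {p, q} := by
  ext x
  constructor
  · rintro ⟨i, rfl⟩
    fin_cases i
    · left; rfl
    · right; rfl
  · rintro (rfl | rfl)
    · exact ⟨0, rfl⟩
    · exact ⟨1, rfl⟩

lemma prime_X0 : Prime (X 0 : MvPolynomial (Fin 2) k) := by
  rw [← MulEquiv.prime_iff (MvPolynomial.finSuccEquiv k 1).toRingEquiv.toMulEquiv]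
  have : (MvPolynomial.finSuccEquiv k 1) (X 0) = Polynomial.X :=
    MvPolynomial.finSuccEquiv_X_zero
  rw [show ((MvPolynomial.finSuccEquiv k 1).toRingEquiv.toMulEquiv (X 0)) = Polynomial.X from this]
  exact Polynomial.prime_X

lemma prime_X0_sub_C (c : k) : Prime (X 0 - C c : MvPolynomial (Fin 2) k) := by
  rw [← MulEquiv.prime_iff (MvPolynomial.finSuccEquiv k 1).toRingEquiv.toMulEquiv]
  have h : (MvPolynomial.finSuccEquiv k 1) (X 0 - C c)
      = Polynomial.X - Polynomial.C (MvPolynomial.C c) := by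
    rw [map_sub, MvPolynomial.finSuccEquiv_X_zero, finSuccEquiv_C']
  rw [show ((MvPolynomial.finSuccEquiv k 1).toRingEquiv.toMulEquiv (X 0 - C c)) = _ from h]
  exact Polynomial.prime_X_sub_C _

lemma main_lemma (H K : MvPolynomial (Fin 2) k)
    (hadj : Algebra.adjoin k ({H, K} : Set (MvPolynomial (Fin 2) k)) = ⊤)
    (m n : ℕ) (hm : 1 ≤ m) (hn : 1 ≤ n)
    (hc : MvPolynomial.coeff (Finsupp.single 0 m + Finsupp.single 1 n) H ≠ 0)
    (hs : ∀ d ∈ H.support, d 0 ≤ m ∧ d 1 ≤ n) : False := by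
  have hcorner0 : (Finsupp.single (0:Fin 2) m + Finsupp.single (1:Fin 2) n : Fin 2 →₀ ℕ) 0 = m := by
    simp [Finsupp.single_apply]
  have hcorner1 : (Finsupp.single (0:Fin 2) m + Finsupp.single (1:Fin 2) n : Fin 2 →₀ ℕ) 1 = n := by
    simp [Finsupp.single_apply]
  set φ : MvPolynomial (Fin 2) k →ₐ[k] MvPolynomial (Fin 2) k :=
    MvPolynomial.aeval ![H, K] with hφ
  have hφsurj : Function.Surjective φ := by
    rw [← AlgHom.range_eq_top, ← Algebra.adjoin_range_eq_range_aeval, range_pair', hadj]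
  have hφinj : Function.Injective φ := my_inj_of_surj φ.toRingHom hφsurj
  set φe : MvPolynomial (Fin 2) k ≃ₐ[k] MvPolynomial (Fin 2) k :=
    AlgEquiv.ofBijective φ ⟨hφinj, hφsurj⟩ with hφe
  have hφeH : φe (X 0) = H := by
    show φ (X 0) = H
    simp [hφ]
  have hHprime : Prime H := by
    rw [← hφeH]
    exact (MulEquiv.prime_iff φe.toRingEquiv.toMulEquiv).mpr prime_X0
  set ev : MvPolynomial (Fin 2) k →ₐ[k] Polynomial k :=
    MvPolynomial.aeval ![(0 : Polynomial k), Polynomial.X] with hev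
  set θ : MvPolynomial (Fin 2) k →ₐ[k] Polynomial k := ev.comp φe.symm.toAlgHom with hθ
  set p : Polynomial k := θ (X 0) with hp
  set q : Polynomial k := θ (X 1) with hq
  have hθeq : (MvPolynomial.aeval ![p, q] : MvPolynomial (Fin 2) k →ₐ[k] Polynomial k) = θ := by
    apply MvPolynomial.algHom_ext
    intro i
    fin_cases i
    · simp [hp]
    · simp [hq]
  have hH0 : MvPolynomial.aeval ![p, q] H = 0 := by
    rw [hθeq, hθ]
    have : φe.symm H = X 0 := by
      rw [AlgEquiv.symm_apply_eq, hφeH]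
    simp [this, hev]
  have hevsurj : Function.Surjective ev := by
    rw [← AlgHom.range_eq_top, ← Algebra.adjoin_range_eq_range_aeval, range_pair]
    apply le_antisymm le_top
    rw [← Polynomial.adjoin_X (R := k)]
    apply Algebra.adjoin_mono
    intro x hx
    right
    exact hx
  have hθsurj : Function.Surjective θ := hevsurj.comp φe.symm.surjective
  have hadjpq : Algebra.adjoin k ({p, q} : Set (Polynomial k)) = ⊤ := by
    rw [← range_pair, Algebra.adjoin_range_eq_range_aeval, hθeq, AlgHom.range_eq_top]
    exact hθsurj
  by_cases hpdeg : 1 ≤ p.natDegree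
  · by_cases hqdeg : 1 ≤ q.natDegree
    · exact corner_eval_ne_zero H hm hn hc hs p q hpdeg hqdeg hH0
    · -- q is a constant
      push_neg at hqdeg
      obtain ⟨c, hcq⟩ := Polynomial.natDegree_eq_zero.mp (by omega : q.natDegree = 0)
      have hfact : (MvPolynomial.aeval ![p, q] : MvPolynomial (Fin 2) k →ₐ[k] Polynomial k)
          = (Polynomial.aeval p).comp (MvPolynomial.aeval ![Polynomial.X, Polynomial.C c]) := by
        apply MvPolynomial.algHom_ext
        intro i
        fin_cases i
        · simp
        · simp [← hcq]
      have hH2 : MvPolynomial.aeval ![Polynomial.X, Polynomial.C c] H = 0 := by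
        have h1 : Polynomial.aeval p
            (MvPolynomial.aeval ![Polynomial.X, Polynomial.C c] H) = 0 := by
          have := congrArg (fun f => f H) hfact
          simp only [AlgHom.coe_comp, Function.comp_apply] at this
          rw [← this, hH0]
        have hcompz : (MvPolynomial.aeval ![Polynomial.X, Polynomial.C c] H).comp p = 0 := by
          rw [← h1, Polynomial.aeval_def, Polynomial.comp, Polynomial.algebraMap_eq]
        rcases Polynomial.comp_eq_zero_iff.mp hcompz with h | ⟨_, h⟩
        · exact h
        · exfalso
          have := congrArg Polynomial.natDegree h
          rw [Polynomial.natDegree_C] at this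
          omega
      set S : MvPolynomial (Fin 2) k ≃ₐ[k] MvPolynomial (Fin 2) k :=
        MvPolynomial.renameEquiv k (Equiv.swap (0 : Fin 2) 1) with hS
      have hSH : MvPolynomial.aeval ![Polynomial.C c, Polynomial.X] (S H) = 0 := by
        show MvPolynomial.aeval ![Polynomial.C c, Polynomial.X]
          (MvPolynomial.rename (⇑(Equiv.swap (0 : Fin 2) 1)) H) = 0
        rw [MvPolynomial.aeval_rename]
        have hfun : ![Polynomial.C c, Polynomial.X] ∘ ⇑(Equiv.swap (0 : Fin 2) 1)
            = ![Polynomial.X, Polynomial.C c] := by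
          funext i
          fin_cases i
          · simp [Equiv.swap_apply_left]
          · simp [Equiv.swap_apply_right]
        rw [hfun, hH2]
      have hdvd0 : (X 0 - C c) ∣ S H := dvd_of_eval_zero (S H) c hSH
      have hSX : S.symm (X 0 - C c) = (X 1 - C c : MvPolynomial (Fin 2) k) := by
        show MvPolynomial.rename (⇑(Equiv.swap (0 : Fin 2) 1).symm) (X 0 - C c) = X 1 - C c
        rw [map_sub, MvPolynomial.rename_X, MvPolynomial.rename_C]
        simp [Equiv.swap_apply_left]
      have hdvd : (X 1 - C c) ∣ H := by
        rw [← hSX]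
        have := map_dvd (S.symm : MvPolynomial (Fin 2) k →ₐ[k] MvPolynomial (Fin 2) k) hdvd0
        simpa using this
      have hprime1 : Prime (X 1 - C c : MvPolynomial (Fin 2) k) := by
        have hSX' : S (X 0 - C c) = (X 1 - C c : MvPolynomial (Fin 2) k) := by
          show MvPolynomial.rename (⇑(Equiv.swap (0 : Fin 2) 1)) (X 0 - C c) = X 1 - C c
          rw [map_sub, MvPolynomial.rename_X, MvPolynomial.rename_C]
          simp [Equiv.swap_apply_left]
        rw [← hSX']
        exact (MulEquiv.prime_iff S.toRingEquiv.toMulEquiv).mpr (prime_X0_sub_C c)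
      obtain ⟨u, hu⟩ := (hprime1.irreducible.associated_of_dvd hHprime.irreducible hdvd)
      obtain ⟨α, hα⟩ := unit_is_C (u : MvPolynomial (Fin 2) k) u.isUnit
      apply hc
      rw [← hu, hα]
      rw [mul_comm, MvPolynomial.coeff_C_mul]
      have h1 : MvPolynomial.coeff (Finsupp.single 0 m + Finsupp.single 1 n)
          (X 1 : MvPolynomial (Fin 2) k) = 0 := by
        rw [MvPolynomial.coeff_X']
        rw [if_neg]
        intro hcon
        have := congrArg (fun f => f (0 : Fin 2)) hcon
        simp only [Finsupp.single_apply] at this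
        rw [hcorner0] at this
        simp at this
        omega
      have h2 : MvPolynomial.coeff (Finsupp.single 0 m + Finsupp.single 1 n)
          (C c : MvPolynomial (Fin 2) k) = 0 := by
        rw [MvPolynomial.coeff_C]
        rw [if_neg]
        intro hcon
        have := congrArg (fun f => f (0 : Fin 2)) hcon
        rw [← this] at hcorner0
        simp at hcorner0
        omega
      rw [MvPolynomial.coeff_sub, h1, h2]
      ring
  · -- p is a constant
    push_neg at hpdeg
    obtain ⟨c, hcp⟩ := Polynomial.natDegree_eq_zero.mp (by omega : p.natDegree = 0)
    -- q has degree 1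
    have hadjq : Algebra.adjoin k ({q} : Set (Polynomial k)) = ⊤ := by
      apply le_antisymm le_top
      rw [← hadjpq]
      apply Algebra.adjoin_le
      rintro x (rfl | rfl)
      · rw [← hcp]
        exact Subalgebra.algebraMap_mem _ c
      · exact Algebra.subset_adjoin rfl
    have hq1 : q.natDegree = 1 := by
      have hX : (Polynomial.X : Polynomial k) ∈ Algebra.adjoin k ({q} : Set (Polynomial k)) := by
        rw [hadjq]; trivial
      rw [Algebra.adjoin_singleton_eq_range_aeval] at hX
      obtain ⟨r, hr⟩ := hX
      have hr' : Polynomial.aeval q r = Polynomial.X := hr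
      have hcomp : r.comp q = Polynomial.X := by
        rw [← hr']
        rw [Polynomial.aeval_def, Polynomial.comp, Polynomial.algebraMap_eq]
      have := congrArg Polynomial.natDegree hcomp
      rw [Polynomial.natDegree_comp, Polynomial.natDegree_X] at this
      exact Nat.eq_one_of_mul_eq_one_left this
    -- key evaluation
    have hfact : (MvPolynomial.aeval ![p, q] : MvPolynomial (Fin 2) k →ₐ[k] Polynomial k)
        = (Polynomial.aeval q).comp (MvPolynomial.aeval ![Polynomial.C c, Polynomial.X]) := by
      apply MvPolynomial.algHom_ext
      intro i
      fin_cases i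
      · simp [← hcp]
      · simp
    have hH1 : MvPolynomial.aeval ![Polynomial.C c, Polynomial.X] H = 0 := by
      have h1 : Polynomial.aeval q (MvPolynomial.aeval ![Polynomial.C c, Polynomial.X] H) = 0 := by
        have := congrArg (fun f => f H) hfact
        simp only [AlgHom.coe_comp, Function.comp_apply] at this
        rw [← this, hH0]
      have hcompz : (MvPolynomial.aeval ![Polynomial.C c, Polynomial.X] H).comp q = 0 := by
        rw [← h1, Polynomial.aeval_def, Polynomial.comp, Polynomial.algebraMap_eq]
      rcases Polynomial.comp_eq_zero_iff.mp hcompz with h | ⟨_, h⟩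
      · exact h
      · exfalso
        have := congrArg Polynomial.natDegree h
        rw [hq1, Polynomial.natDegree_C] at this
        exact one_ne_zero this
    have hdvd : (X 0 - C c) ∣ H := dvd_of_eval_zero H c hH1
    obtain ⟨u, hu⟩ := ((prime_X0_sub_C c).irreducible.associated_of_dvd
      hHprime.irreducible hdvd)
    obtain ⟨α, hα⟩ := unit_is_C (u : MvPolynomial (Fin 2) k) u.isUnit
    apply hc
    rw [← hu, hα]
    rw [mul_comm, MvPolynomial.coeff_C_mul]
    have h1 : MvPolynomial.coeff (Finsupp.single 0 m + Finsupp.single 1 n)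
        (X 0 : MvPolynomial (Fin 2) k) = 0 := by
      rw [MvPolynomial.coeff_X']
      rw [if_neg]
      intro hcon
      have := congrArg (fun f => f (1 : Fin 2)) hcon
      simp only [Finsupp.single_apply] at this
      rw [hcorner1] at this
      simp at this
      omega
    have h2 : MvPolynomial.coeff (Finsupp.single 0 m + Finsupp.single 1 n)
        (C c : MvPolynomial (Fin 2) k) = 0 := by
      rw [MvPolynomial.coeff_C]
      rw [if_neg]
      intro hcon
      have := congrArg (fun f => f (0 : Fin 2)) hcon
      rw [← this] at hcorner0
      simp at hcorner0
      omega
    rw [MvPolynomial.coeff_sub, h1, h2]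
    ring

/-- No variable of `A = k[X,Y]` is a rectangular element of `A`: if
`A = k[F,G]` then for every coordinate system `(U,V)` of `A` there are no `m,n ≥ 1`
with `(m,n)` in the support of `F` w.r.t. `(U,V)` and the support contained in `[0,m]×[0,n]`. -/
theorem stmt5 (k : Type) [Field k] (F G : MvPolynomial (Fin 2) k)
    (hvar : Algebra.adjoin k ({F, G} : Set (MvPolynomial (Fin 2) k)) = ⊤) :
    ∀ U V G' : MvPolynomial (Fin 2) k,
      Function.Bijective ⇑(MvPolynomial.aeval (R := k) ![U, V]) →
      MvPolynomial.aeval ![U, V] G' = F →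
      ∀ m n : ℕ, 1 ≤ m → 1 ≤ n →
        ¬ (MvPolynomial.coeff (Finsupp.single 0 m + Finsupp.single 1 n) G' ≠ 0 ∧
            ∀ d ∈ G'.support, d 0 ≤ m ∧ d 1 ≤ n) := by
  intro U V G' hbij hF m n hm hn
  rintro ⟨hc, hs⟩
  set e : MvPolynomial (Fin 2) k ≃ₐ[k] MvPolynomial (Fin 2) k :=
    AlgEquiv.ofBijective (MvPolynomial.aeval ![U, V]) hbij with he
  set K' : MvPolynomial (Fin 2) k := e.symm G with hK'
  have hadj : Algebra.adjoin k ({G', K'} : Set (MvPolynomial (Fin 2) k)) = ⊤ := by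
    have hmap : (Algebra.adjoin k ({G', K'} : Set (MvPolynomial (Fin 2) k))).map e.toAlgHom
        = Algebra.adjoin k ({F, G} : Set (MvPolynomial (Fin 2) k)) := by
      rw [AlgHom.map_adjoin]
      congr 1
      rw [Set.image_pair]
      have h1 : e.toAlgHom G' = F := hF
      have h2 : e.toAlgHom K' = G := e.apply_symm_apply G
      rw [h1, h2]
    apply Subalgebra.map_injective (f := e.toAlgHom) e.injective
    rw [hmap, hvar, Algebra.map_top]
    exact ((AlgHom.range_eq_top _).mpr e.surjective).symm
  exact main_lemma G' K' hadj m n hm hn hc hs
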